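/- Sharp interpolation: there exists a constant C = C(d) such that for every c ∈ W^{1,∞}(ℝ^d) ∩ L²_uloc(ℝ^d), ‖c‖_{L^∞(ℝ^d)} ≤ C ‖c‖_{L²_uloc(ℝ^d)}^{2/(d+2)} ‖∇c‖_{L^∞(ℝ^d)}^{d/(d+2)} + C‖c‖_{L²_uloc(ℝ^d)}. -/

import Mathlib

open MeasureTheory

/-- Sharp interpolation: there is `C = C(d)` such that for every
`c ∈ W^{1,∞}(ℝ^d) ∩ L²_uloc(ℝ^d)`,
`‖c‖_{L^∞} ≤ C ‖c‖_{L²_uloc}^{2/(d+2)} ‖∇c‖_{L^∞}^{d/(d+2)} + C ‖c‖_{L²_uloc}`. -/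
theorem stmt12 (d : ℕ) (hd : 0 < d) :
    ∃ C : ℝ, 0 < C ∧
      ∀ (c : EuclideanSpace ℝ (Fin d) → ℝ) (A L : ℝ), 0 ≤ A → 0 ≤ L →
        Differentiable ℝ c →
        (∀ x, ‖fderiv ℝ c x‖ ≤ L) →
        (∀ x, ∫ y in Metric.ball x 1, (c y) ^ 2 ≤ A ^ 2) →
        ∀ x, |c x| ≤ C * A ^ ((2 : ℝ) / (d + 2)) * L ^ ((d : ℝ) / (d + 2)) + C * A := by
  haveI : Nonempty (Fin d) := Fin.pos_iff_nonempty.mp hd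
  set E := EuclideanSpace ℝ (Fin d)
  set V : ℝ := (volume (Metric.ball (0 : E) 1)).toReal with hV
  have hVpos : 0 < V := by
    apply ENNReal.toReal_pos
    · exact (Metric.measure_ball_pos volume 0 one_pos).ne'
    · exact (measure_ball_lt_top).ne
  set p : ℝ := 1 / ((d : ℝ) + 2) with hp
  have hd2 : (0:ℝ) < (d : ℝ) + 2 := by positivity
  have hppos : 0 < p := by positivity
  refine ⟨2 / V ^ p + 2 / Real.sqrt V, by positivity, ?_⟩
  intro c A L hA hL hc hfd hloc x
  set M := |c x| with hM
  have hMnn : 0 ≤ M := abs_nonneg _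
  have hcont : Continuous c := hc.continuous
  have hi : IntegrableOn (fun y => (c y) ^ 2) (Metric.ball x 1) volume :=
    (((hcont.pow 2).continuousOn).integrableOn_compact
      (isCompact_closedBall x 1)).mono_set Metric.ball_subset_closedBall
  have hC1 : (0:ℝ) < V ^ p := Real.rpow_pos_of_pos hVpos p
  have hC2 : (0:ℝ) < Real.sqrt V := Real.sqrt_pos.mpr hVpos
  have hRHS1 : 0 ≤ A ^ ((2:ℝ) / (d + 2)) * L ^ ((d:ℝ) / (d + 2)) := by
    have := Real.rpow_nonneg hA ((2:ℝ)/(d+2))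
    have := Real.rpow_nonneg hL ((d:ℝ)/(d+2))
    positivity
  -- key estimate
  have key : ∀ r : ℝ, 0 < r → r ≤ 1 → L * r ≤ M / 2 →
      (M / 2) ^ 2 * (r ^ d * V) ≤ A ^ 2 := by
    intro r hr hr1 hLr
    have hsub : Metric.ball x r ⊆ Metric.ball x 1 := Metric.ball_subset_ball hr1
    have hpt : ∀ y ∈ Metric.ball x r, (M / 2) ^ 2 ≤ (c y) ^ 2 := by
      intro y hy
      have hdy : dist y x < r := Metric.mem_ball.mp hy
      have hlip : ‖c y - c x‖ ≤ L * ‖y - x‖ :=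
        (convex_univ).norm_image_sub_le_of_norm_fderiv_le
          (fun z _ => hc z) (fun z _ => hfd z) (Set.mem_univ x) (Set.mem_univ y)
      have h1 : |c y - c x| ≤ M / 2 := by
        calc |c y - c x| ≤ L * ‖y - x‖ := hlip
          _ ≤ L * r := by
              have : ‖y - x‖ ≤ r := by rw [← dist_eq_norm]; exact hdy.le
              exact mul_le_mul_of_nonneg_left this hL
          _ ≤ M / 2 := hLr
      have h2 : M / 2 ≤ |c y| := by
        have := abs_sub_abs_le_abs_sub (c x) (c y)
        rw [abs_sub_comm] at this
        linarith [this]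
      calc (M / 2) ^ 2 ≤ |c y| ^ 2 := by
            apply pow_le_pow_left₀ (by linarith) h2
        _ = (c y) ^ 2 := sq_abs _
    have hvol : (volume (Metric.ball x r)).toReal = r ^ d * V := by
      rw [Measure.addHaar_ball volume x hr.le, finrank_euclideanSpace_fin,
        ENNReal.toReal_mul, ENNReal.toReal_ofReal (by positivity)]
    calc (M / 2) ^ 2 * (r ^ d * V)
        = ∫ _ in Metric.ball x r, (M / 2) ^ 2 := by
          rw [setIntegral_const, measureReal_def, hvol, smul_eq_mul]; ring
      _ ≤ ∫ y in Metric.ball x r, (c y) ^ 2 := by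
          apply setIntegral_mono_on
          · exact integrableOn_const measure_ball_lt_top.ne
          · exact hi.mono_set hsub
          · exact measurableSet_ball
          · exact hpt
      _ ≤ ∫ y in Metric.ball x 1, (c y) ^ 2 := by
          apply setIntegral_mono_set hi
          · exact Filter.Eventually.of_forall fun y => sq_nonneg _
          · exact hsub.eventuallyLE
      _ ≤ A ^ 2 := hloc x
  rcases eq_or_lt_of_le hMnn with hM0 | hMpos
  · rw [← hM0]; positivity
  rcases le_or_gt M (2 * L) with hcase | hcase
  · -- r = M / (2L), L > 0
    have hLpos : 0 < L := by nlinarith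
    set r : ℝ := M / (2 * L) with hr
    have hrpos : 0 < r := by positivity
    have hr1 : r ≤ 1 := by
      rw [hr, div_le_one (by positivity)]; exact hcase
    have hLr : L * r = M / 2 := by
      rw [hr, mul_div_assoc', div_eq_div_iff (by positivity) (by norm_num)]; ring
    have hkey := key r hrpos hr1 hLr.le
    -- (M/2)^(d+2) * V ≤ A^2 * L^d
    have h2 : (M / 2) ^ (d + 2) * V ≤ A ^ 2 * L ^ d := by
      have hrd : r ^ d = (M / 2) ^ d / L ^ d := by
        rw [hr, div_pow, mul_pow, div_pow, div_div]
      rw [hrd] at hkey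
      have hLd : (0:ℝ) < L ^ d := by positivity
      rw [pow_add]
      calc (M/2)^d * (M/2)^2 * V = ((M/2)^2 * ((M/2)^d / L^d * V)) * L^d := by
            field_simp
        _ ≤ A ^ 2 * L ^ d := mul_le_mul_of_nonneg_right hkey hLd.le
    have h3 : (M / 2) ^ (d + 2) ≤ A ^ 2 * L ^ d / V := by
      rw [le_div_iff₀ hVpos]; exact h2
    have hM2 : 0 ≤ M / 2 := by linarith
    have h4 : ((M / 2) ^ (d + 2)) ^ p ≤ (A ^ 2 * L ^ d / V) ^ p :=
      Real.rpow_le_rpow (by positivity) h3 hppos.le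
    have hlhs : ((M / 2) ^ (d + 2) : ℝ) ^ p = M / 2 := by
      rw [← Real.rpow_natCast (M/2) (d+2), ← Real.rpow_mul hM2]
      have : ((d + 2 : ℕ) : ℝ) * p = 1 := by
        rw [hp]; push_cast; field_simp
      rw [this, Real.rpow_one]
    have hrhs : (A ^ 2 * L ^ d / V : ℝ) ^ p
        = A ^ ((2:ℝ)/(d+2)) * L ^ ((d:ℝ)/(d+2)) / V ^ p := by
      rw [Real.div_rpow (by positivity) hVpos.le, Real.mul_rpow (by positivity) (by positivity),
        ← Real.rpow_natCast A 2, ← Real.rpow_natCast L d,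
        ← Real.rpow_mul hA, ← Real.rpow_mul hL]
      norm_num [hp]
      constructor <;> ring_nf
    rw [hlhs, hrhs] at h4
    have hfinal : M ≤ 2 / V ^ p * (A ^ ((2:ℝ)/(d+2)) * L ^ ((d:ℝ)/(d+2))) := by
      rw [div_mul_eq_mul_div, mul_div_assoc]
      linarith
    calc M ≤ 2 / V ^ p * (A ^ ((2:ℝ)/(d+2)) * L ^ ((d:ℝ)/(d+2))) := hfinal
      _ ≤ (2 / V ^ p + 2 / Real.sqrt V) * A ^ ((2:ℝ)/(d+2)) * L ^ ((d:ℝ)/(d+2)) + 0 := by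
          rw [add_zero, mul_assoc]
          apply mul_le_mul_of_nonneg_right _ hRHS1
          · exact le_add_of_nonneg_right (by positivity)
      _ ≤ _ := by
          apply add_le_add_right
          positivity
  · -- r = 1
    have hkey := key 1 one_pos le_rfl (by linarith)
    rw [one_pow, one_mul] at hkey
    have h2 : (M / 2) ^ 2 ≤ A ^ 2 / V := by
      rw [le_div_iff₀ hVpos]; exact hkey
    have h3 : M / 2 ≤ A / Real.sqrt V := by
      have h := Real.sqrt_le_sqrt h2
      rwa [Real.sqrt_sq (by linarith), Real.sqrt_div (by positivity) V,
        Real.sqrt_sq hA] at h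
    have h4 : M ≤ 2 / Real.sqrt V * A := by
      rw [div_mul_eq_mul_div, mul_div_assoc]
      linarith
    calc M ≤ 2 / Real.sqrt V * A := h4
      _ ≤ 0 + (2 / V ^ p + 2 / Real.sqrt V) * A := by
          rw [zero_add]
          apply mul_le_mul_of_nonneg_right _ hA
          exact le_add_of_nonneg_left (by positivity)
      _ ≤ _ := by
          apply add_le_add_left
          positivity
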